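/- Let (Ω, 𝓕, μ) be a probability space, let r < n, and let γ : Ω → Matrix (Fin r) (Fin n) ℝ be measurable with rank γ(ω) = r for μ-a.e. ω. Then there exists a measurable δ : Ω → Matrix (Fin (n−r)) (Fin n) ℝ such that for μ-a.e. ω: (i) rank δ(ω) = n − r; (ii) the row span of δ(ω) is the orthogonal complement in ℝ^n of the row span of γ(ω) (equivalently γ(ω) * (δ(ω))ᵀ = 0); and (iii) the n × n matrix obtained by stacking γ(ω) on top of δ(ω) is invertible. -/

import Mathlib

open MeasureTheory

open MeasureTheory Matrix Submodule Set Module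

namespace Stmt8Aux

variable {Ω : Type*} [MeasurableSpace Ω]

lemma meas_det {m : ℕ} {f : Ω → Matrix (Fin m) (Fin m) ℝ}
    (hf : ∀ i j, Measurable fun ω => f ω i j) :
    Measurable fun ω => (f ω).det := by
  simp only [Matrix.det_apply']
  refine Finset.measurable_sum _ fun σ _ => ?_
  exact ((Finset.measurable_prod _ fun i _ => hf _ _)).const_mul _

lemma meas_mul {a b c : ℕ} {f : Ω → Matrix (Fin a) (Fin b) ℝ} {g : Ω → Matrix (Fin b) (Fin c) ℝ}
    (hf : ∀ i j, Measurable fun ω => f ω i j) (hg : ∀ i j, Measurable fun ω => g ω i j)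
    (i : Fin a) (j : Fin c) : Measurable fun ω => (f ω * g ω) i j := by
  simp only [Matrix.mul_apply]
  exact Finset.measurable_sum _ fun k _ => (hf i k).mul (hg k j)

lemma meas_inv {m : ℕ} {f : Ω → Matrix (Fin m) (Fin m) ℝ}
    (hf : ∀ i j, Measurable fun ω => f ω i j) (i j : Fin m) :
    Measurable fun ω => (f ω)⁻¹ i j := by
  simp only [Matrix.inv_def, Matrix.smul_apply, smul_eq_mul, Ring.inverse_eq_inv']
  refine Measurable.mul ((meas_det hf).inv) ?_
  simp only [Matrix.adjugate_apply]
  refine meas_det fun a b => ?_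
  rcases eq_or_ne a j with h | h
  · simp [Matrix.updateRow_apply, h]
  · simp only [Matrix.updateRow_apply, if_neg h]
    exact hf a b



noncomputable def proj (r n : ℕ) (A : Matrix (Fin r) (Fin n) ℝ) : Matrix (Fin n) (Fin n) ℝ :=
  1 - Aᵀ * (A * Aᵀ)⁻¹ * A

noncomputable def dOf (r n : ℕ) (e : Fin (n - r) → Fin n) (A : Matrix (Fin r) (Fin n) ℝ) :
    Matrix (Fin (n - r)) (Fin n) ℝ :=
  (proj r n A).submatrix e id

def good (r n : ℕ) (e : Fin (n - r) → Fin n) (A : Matrix (Fin r) (Fin n) ℝ) : Prop :=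
  IsUnit (dOf r n e A * (dOf r n e A)ᵀ).det

/-- a square matrix of full rank is a unit -/
lemma isUnit_of_rank_eq {m : ℕ} {B : Matrix (Fin m) (Fin m) ℝ} (hB : B.rank = m) : IsUnit B := by
  rw [← Matrix.mulVec_surjective_iff_isUnit]
  have : LinearMap.range B.mulVecLin = ⊤ := by
    apply Submodule.eq_top_of_finrank_eq
    rw [Module.finrank_fin_fun]
    exact hB
  intro v
  have := LinearMap.range_eq_top.mp this v
  simpa using this

section pointwise

variable {r n : ℕ} {A : Matrix (Fin r) (Fin n) ℝ}

lemma gram_isUnit (hA : A.rank = r) : IsUnit (A * Aᵀ) := by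
  apply isUnit_of_rank_eq
  rw [Matrix.rank_self_mul_transpose, hA]

lemma proj_mul (hA : A.rank = r) : A * proj r n A = 0 := by
  have hG := (Matrix.isUnit_iff_isUnit_det _).mp (gram_isUnit hA)
  rw [proj, Matrix.mul_sub, Matrix.mul_one, ← Matrix.mul_assoc A (Aᵀ * (A * Aᵀ)⁻¹) A,
    ← Matrix.mul_assoc A Aᵀ (A * Aᵀ)⁻¹, Matrix.mul_nonsing_inv _ hG, Matrix.one_mul, sub_self]

lemma proj_symm : (proj r n A)ᵀ = proj r n A := by
  have hGt : (A * Aᵀ)ᵀ = A * Aᵀ := by rw [Matrix.transpose_mul, Matrix.transpose_transpose]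
  rw [proj, Matrix.transpose_sub, Matrix.transpose_one, Matrix.transpose_mul,
    Matrix.transpose_mul, Matrix.transpose_transpose, Matrix.transpose_nonsing_inv, hGt,
    Matrix.mul_assoc]

lemma proj_range (hA : A.rank = r) :
    LinearMap.range (proj r n A).mulVecLin = LinearMap.ker A.mulVecLin := by
  ext v
  constructor
  · rintro ⟨w, rfl⟩
    simp only [LinearMap.mem_ker, Matrix.mulVecLin_apply, Matrix.mulVec_mulVec,
      proj_mul hA, Matrix.zero_mulVec]
  · intro hv
    refine ⟨v, ?_⟩
    simp only [LinearMap.mem_ker, Matrix.mulVecLin_apply] at hv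
    simp only [Matrix.mulVecLin_apply, proj, Matrix.sub_mulVec, Matrix.one_mulVec,
      Matrix.mul_assoc, ← Matrix.mulVec_mulVec, hv, Matrix.mulVec_zero, sub_zero]

lemma ker_eq_orth :
    (LinearMap.ker A.mulVecLin : Set (Fin n → ℝ)) =
      {v : Fin n → ℝ | ∀ u ∈ Submodule.span ℝ (Set.range fun i => A i),
        dotProduct v u = 0} := by
  ext v
  simp only [SetLike.mem_coe, LinearMap.mem_ker, Matrix.mulVecLin_apply, Set.mem_setOf_eq]
  constructor
  · intro hv u hu
    induction hu using Submodule.span_induction with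
    | mem x hx =>
      obtain ⟨i, rfl⟩ := hx
      rw [dotProduct_comm]
      exact congrFun hv i
    | zero => simp
    | add x y _ _ hx hy => rw [dotProduct_add, hx, hy, add_zero]
    | smul c x _ hx => rw [dotProduct_smul, hx, smul_zero]
  · intro hv
    funext i
    have := hv (A i) (Submodule.subset_span ⟨i, rfl⟩)
    rw [dotProduct_comm] at this
    simpa [Matrix.mulVec, dotProduct] using this

lemma proj_rank (hrn : r < n) (hA : A.rank = r) : (proj r n A).rank = n - r := by
  have h1 := LinearMap.finrank_range_add_finrank_ker (A.mulVecLin)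
  rw [Module.finrank_fin_fun] at h1
  have hA' : finrank ℝ (LinearMap.range A.mulVecLin) = r := hA
  have : (proj r n A).rank = finrank ℝ (LinearMap.ker A.mulVecLin) := by
    rw [Matrix.rank, proj_range hA]
  omega


lemma span_rows_proj (hA : A.rank = r) :
    Submodule.span ℝ (Set.range (proj r n A)) = LinearMap.ker A.mulVecLin := by
  rw [← proj_range hA, Matrix.range_mulVecLin, ← Matrix.row_transpose, proj_symm]
  rfl

lemma ker_finrank (hA : A.rank = r) :
    Module.finrank ℝ (LinearMap.ker A.mulVecLin) = n - r := by
  have h1 := LinearMap.finrank_range_add_finrank_ker (A.mulVecLin)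
  rw [Module.finrank_fin_fun] at h1
  have hA' : Module.finrank ℝ (LinearMap.range A.mulVecLin) = r := hA
  omega

lemma good_rank {e : Fin (n - r) → Fin n} (he : good r n e A) :
    (dOf r n e A).rank = n - r := by
  have h1 : (dOf r n e A * (dOf r n e A)ᵀ).rank = n - r := by
    rw [Matrix.rank_of_isUnit _ ((Matrix.isUnit_iff_isUnit_det _).mpr he), Fintype.card_fin]
  rwa [Matrix.rank_self_mul_transpose] at h1

lemma dOf_row {e : Fin (n - r) → Fin n} (k : Fin (n - r)) :
    dOf r n e A k = proj r n A (e k) := rfl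

lemma span_rows_dOf (hA : A.rank = r) {e : Fin (n - r) → Fin n} (he : good r n e A) :
    Submodule.span ℝ (Set.range (dOf r n e A)) = LinearMap.ker A.mulVecLin := by
  apply Submodule.eq_of_le_of_finrank_eq
  · rw [← span_rows_proj hA]
    apply Submodule.span_mono
    rintro x ⟨k, rfl⟩
    exact ⟨e k, (dOf_row k).symm⟩
  · rw [show Set.range (dOf r n e A) = Set.range (dOf r n e A).row from rfl,
      ← Matrix.rank_eq_finrank_span_row, good_rank he, ker_finrank hA]

lemma mul_dOf_transpose (hA : A.rank = r) {e : Fin (n - r) → Fin n} (he : good r n e A) :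
    A * (dOf r n e A)ᵀ = 0 := by
  ext i j
  have hj : A.mulVecLin (dOf r n e A j) = 0 := by
    have : dOf r n e A j ∈ LinearMap.ker A.mulVecLin := by
      rw [← span_rows_dOf hA he]
      exact Submodule.subset_span ⟨j, rfl⟩
    exact this
  have := congrFun hj i
  simpa [Matrix.mul_apply, Matrix.mulVecLin_apply, Matrix.mulVec, dotProduct,
    Matrix.transpose_apply] using this

lemma exists_good (hA : A.rank = r) : ∃ e : Fin (n - r) → Fin n, good r n e A := by
  classical
  obtain ⟨t, hts, hspan, hind⟩ := exists_linearIndependent ℝ (Set.range (proj r n A))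
  have htfin : t.Finite := hind.setFinite
  haveI : Fintype t := htfin.fintype
  have hcard : t.toFinset.card = n - r := by
    have h1 : Module.finrank ℝ (Submodule.span ℝ t) = n - r := by
      rw [hspan, span_rows_proj hA, ker_finrank hA]
    rw [finrank_span_set_eq_card hind] at h1
    exact h1
  let g : Fin (n - r) ≃ t.toFinset := (Finset.equivFinOfCardEq hcard).symm
  have hmem : ∀ k, ((g k : Fin n → ℝ)) ∈ Set.range (proj r n A) := fun k =>
    hts (Set.mem_toFinset.mp (g k).2)
  choose e he using hmem
  refine ⟨e, ?_⟩
  have hD : dOf r n e A = fun k => ((g k : Fin n → ℝ)) := by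
    funext k
    rw [dOf_row, he k]
  have hindD : LinearIndependent ℝ (dOf r n e A) := by
    rw [hD]
    have : (fun k => ((g k : Fin n → ℝ))) =
        (fun x : t => (x : Fin n → ℝ)) ∘ fun k => (⟨(g k : Fin n → ℝ), Set.mem_toFinset.mp (g k).2⟩ : t) := rfl
    rw [this]
    apply hind.comp
    intro k l hkl
    simp only [Subtype.mk.injEq] at hkl
    exact g.injective (Subtype.ext hkl)
  have hrank : (dOf r n e A).rank = n - r := by
    rw [LinearIndependent.rank_matrix (M := dOf r n e A) hindD, Fintype.card_fin]
  have : (dOf r n e A * (dOf r n e A)ᵀ).rank = n - r := by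
    rwa [Matrix.rank_self_mul_transpose]
  exact (Matrix.isUnit_iff_isUnit_det _).mp (isUnit_of_rank_eq this)

lemma stacked_isUnit (hrn : r < n) (hA : A.rank = r) {e : Fin (n - r) → Fin n}
    (he : good r n e A) :
    IsUnit ((Matrix.reindex (finSumFinEquiv.trans
        (finCongr (Nat.add_sub_cancel' hrn.le))) (Equiv.refl (Fin n)))
      (Matrix.fromRows A (dOf r n e A))) := by
  set D := dOf r n e A with hD
  set eq := finSumFinEquiv.trans (finCongr (Nat.add_sub_cancel' hrn.le))
  set M := (Matrix.reindex eq (Equiv.refl (Fin n))) (Matrix.fromRows A D) with hM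
  have hrows : Set.range M = Set.range A ∪ Set.range D := by
    have h1 : Set.range M = Set.range (Matrix.fromRows A D) := by
      ext v
      constructor
      · rintro ⟨k, rfl⟩
        exact ⟨eq.symm k, rfl⟩
      · rintro ⟨s, rfl⟩
        refine ⟨eq s, ?_⟩
        funext j
        simp [hM, Matrix.reindex_apply, Matrix.submatrix_apply]
    rw [h1]
    exact Sum.elim_range A D
  have hspan : Submodule.span ℝ (Set.range M) = ⊤ := by
    rw [hrows, Submodule.span_union, span_rows_dOf hA he]
    apply Submodule.eq_top_of_finrank_eq
    rw [Module.finrank_fin_fun]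
    have hinf : Submodule.span ℝ (Set.range A) ⊓ LinearMap.ker A.mulVecLin = ⊥ := by
      rw [Submodule.eq_bot_iff]
      rintro v ⟨hv1, hv2⟩
      have hv2' : v ∈ (LinearMap.ker A.mulVecLin : Set (Fin n → ℝ)) := hv2
      rw [ker_eq_orth] at hv2'
      have := hv2' v hv1
      exact dotProduct_self_eq_zero.mp this
    have hsum := Submodule.finrank_sup_add_finrank_inf_eq
      (Submodule.span ℝ (Set.range A)) (LinearMap.ker A.mulVecLin)
    rw [hinf, finrank_bot, add_zero, ker_finrank hA, show Set.range A = Set.range A.row from rfl,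
      ← Matrix.rank_eq_finrank_span_row, hA]
      at hsum
    change finrank ℝ ↥(span ℝ (range A) ⊔ LinearMap.ker A.mulVecLin) = _ at hsum
    omega
  rw [← Matrix.vecMul_surjective_iff_isUnit]
  have : LinearMap.range M.vecMulLinear = ⊤ := by
    rw [range_vecMulLinear]; exact hspan
  intro v
  obtain ⟨w, hw⟩ := LinearMap.range_eq_top.mp this v
  exact ⟨w, hw⟩

end pointwise


def NN (r n : ℕ) : ℕ := Fintype.card (Fin (n - r) → Fin n)

noncomputable def enum (r n : ℕ) : Fin (NN r n) ≃ (Fin (n - r) → Fin n) :=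
  (Fintype.equivFin _).symm

def pP (r n : ℕ) (k : ℕ) (A : Matrix (Fin r) (Fin n) ℝ) : Prop :=
  (∃ hk : k < NN r n, good r n (enum r n ⟨k, hk⟩) A) ∨ NN r n ≤ k

lemma pP_ex (r n : ℕ) (A : Matrix (Fin r) (Fin n) ℝ) : ∃ k, pP r n k A :=
  ⟨NN r n, Or.inr le_rfl⟩

open Classical in
noncomputable def sel (r n : ℕ) (A : Matrix (Fin r) (Fin n) ℝ) : ℕ := Nat.find (pP_ex r n A)

open Classical in
noncomputable def delta (r n : ℕ) (A : Matrix (Fin r) (Fin n) ℝ) :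
    Matrix (Fin (n - r)) (Fin n) ℝ :=
  if h : sel r n A < NN r n then dOf r n (enum r n ⟨sel r n A, h⟩) A else 0

open Classical in
lemma sel_le (r n : ℕ) (A : Matrix (Fin r) (Fin n) ℝ) : sel r n A ≤ NN r n :=
  Nat.find_le (Or.inr le_rfl)

open Classical in
lemma delta_spec {r n : ℕ} {A : Matrix (Fin r) (Fin n) ℝ}
    (hgood : ∃ e, good r n e A) :
    ∃ e, good r n e A ∧ delta r n A = dOf r n e A := by
  obtain ⟨e, he⟩ := hgood
  have hk0 : pP r n ((enum r n).symm e : Fin (NN r n)) A := by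
    refine Or.inl ⟨((enum r n).symm e).2, ?_⟩
    convert he
    simp [Fin.eta]
  have hlt : sel r n A < NN r n :=
    lt_of_le_of_lt (Nat.find_le hk0) ((enum r n).symm e).2
  have hspec : pP r n (sel r n A) A := Nat.find_spec (pP_ex r n A)
  rcases hspec with ⟨hk, hg⟩ | hge
  · exact ⟨enum r n ⟨sel r n A, hk⟩, hg, by rw [delta, dif_pos hlt]⟩
  · omega

open Classical in
lemma sel_eq_iff {r n : ℕ} {A : Matrix (Fin r) (Fin n) ℝ} {m : ℕ} :
    sel r n A = m ↔ pP r n m A ∧ ∀ k < m, ¬ pP r n k A := by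
  rw [sel, Nat.find_eq_iff]



section meas

variable {Ω : Type*} [MeasurableSpace Ω] {r n : ℕ} {γ : Ω → Matrix (Fin r) (Fin n) ℝ}

lemma proj_meas (hγ : ∀ i j, Measurable fun ω => γ ω i j) :
    ∀ i j, Measurable fun ω => proj r n (γ ω) i j := by
  intro i j
  have ht : ∀ (i : Fin n) (j : Fin r), Measurable fun ω => (γ ω)ᵀ i j := fun i j => hγ j i
  have hG : ∀ (i j : Fin r), Measurable fun ω => (γ ω * (γ ω)ᵀ) i j := meas_mul hγ ht
  have hinv : ∀ (i j : Fin r), Measurable fun ω => (γ ω * (γ ω)ᵀ)⁻¹ i j := meas_inv hG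
  have h2 : ∀ (i : Fin n) (j : Fin r),
      Measurable fun ω => ((γ ω)ᵀ * (γ ω * (γ ω)ᵀ)⁻¹) i j := meas_mul ht hinv
  have h3 : ∀ (i j : Fin n),
      Measurable fun ω => ((γ ω)ᵀ * (γ ω * (γ ω)ᵀ)⁻¹ * γ ω) i j := meas_mul h2 hγ
  simp only [proj, Matrix.sub_apply]
  exact measurable_const.sub (h3 i j)

lemma dOf_meas (hγ : ∀ i j, Measurable fun ω => γ ω i j) (e : Fin (n - r) → Fin n) :
    ∀ i j, Measurable fun ω => dOf r n e (γ ω) i j := fun i j => proj_meas hγ (e i) j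

lemma good_meas (hγ : ∀ i j, Measurable fun ω => γ ω i j) (e : Fin (n - r) → Fin n) :
    MeasurableSet {ω | good r n e (γ ω)} := by
  have hd : Measurable fun ω => (dOf r n e (γ ω) * (dOf r n e (γ ω))ᵀ).det :=
    meas_det (meas_mul (dOf_meas hγ e) fun i j => dOf_meas hγ e j i)
  have heq : {ω | good r n e (γ ω)} =
      (fun ω => (dOf r n e (γ ω) * (dOf r n e (γ ω))ᵀ).det) ⁻¹' ({0}ᶜ) := by
    ext ω
    simp [good, isUnit_iff_ne_zero]
  rw [heq]
  exact hd (measurableSet_singleton 0).compl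

lemma pP_meas (hγ : ∀ i j, Measurable fun ω => γ ω i j) (k : ℕ) :
    MeasurableSet {ω | pP r n k (γ ω)} := by
  by_cases hk : k < NN r n
  · have heq : {ω | pP r n k (γ ω)} = {ω | good r n (enum r n ⟨k, hk⟩) (γ ω)} := by
      ext ω
      simp only [pP, Set.mem_setOf_eq]
      constructor
      · rintro (⟨hk', hg⟩ | hge)
        · exact hg
        · omega
      · intro hg
        exact Or.inl ⟨hk, hg⟩
    rw [heq]
    exact good_meas hγ _
  · have heq : {ω | pP r n k (γ ω)} = Set.univ := by
      ext ω
      simp [pP, Nat.le_of_not_lt hk]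
    rw [heq]
    exact MeasurableSet.univ

lemma sel_meas (hγ : ∀ i j, Measurable fun ω => γ ω i j) (m : ℕ) :
    MeasurableSet {ω | sel r n (γ ω) = m} := by
  have heq : {ω | sel r n (γ ω) = m} =
      {ω | pP r n m (γ ω)} ∩ ⋂ (k : ℕ) (_ : k < m), {ω | pP r n k (γ ω)}ᶜ := by
    ext ω
    simp only [Set.mem_setOf_eq, sel_eq_iff, Set.mem_inter_iff, Set.mem_iInter,
      Set.mem_compl_iff]
  rw [heq]
  exact (pP_meas hγ m).inter
    (MeasurableSet.iInter fun k => MeasurableSet.iInter fun _ => (pP_meas hγ k).compl)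

open Classical in
lemma delta_meas (hγ : ∀ i j, Measurable fun ω => γ ω i j) :
    ∀ i j, Measurable fun ω => delta r n (γ ω) i j := by
  intro i j
  have key : (fun ω => delta r n (γ ω) i j) = fun ω =>
      ∑ m ∈ Finset.range (NN r n + 1), if sel r n (γ ω) = m then
        (if h : m < NN r n then dOf r n (enum r n ⟨m, h⟩) (γ ω) i j else 0) else 0 := by
    funext ω
    rw [Finset.sum_ite_eq, if_pos (Finset.mem_range.mpr (Nat.lt_succ_of_le (sel_le r n (γ ω))))]
    rw [delta]
    by_cases h : sel r n (γ ω) < NN r n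
    · rw [dif_pos h, dif_pos h]
    · rw [dif_neg h, dif_neg h]
      rfl
  rw [key]
  refine Finset.measurable_sum _ fun m _ => ?_
  refine Measurable.ite (sel_meas hγ m) ?_ measurable_const
  by_cases h : m < NN r n
  · simpa only [dif_pos h] using dOf_meas hγ _ i j
  · simp only [dif_neg h]
    exact measurable_const

end meas

end Stmt8Aux

open MeasureTheory


/-- Measurable selection of an orthogonal complementary full-rank matrix: given a
measurable `γ : Ω → Matrix (Fin r) (Fin n) ℝ` of full row rank `r < n` a.e., there is a
measurable `δ : Ω → Matrix (Fin (n - r)) (Fin n) ℝ` such that a.e. `δ(ω)` has rank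
`n - r`, the row span of `δ(ω)` is the orthogonal complement (for the standard inner
product, i.e. the dot product) of the row span of `γ(ω)` (equivalently `γ(ω) * δ(ω)ᵀ = 0`),
and the `n × n` matrix obtained by stacking `γ(ω)` on top of `δ(ω)` is invertible. -/
theorem stmt_8 {Ω : Type*} [MeasurableSpace Ω] (μ : Measure Ω) [IsProbabilityMeasure μ]
    (r n : ℕ) (hrn : r < n) (γ : Ω → Matrix (Fin r) (Fin n) ℝ)
    (hγ : ∀ i j, Measurable fun ω => γ ω i j)
    (hrank : ∀ᵐ ω ∂μ, (γ ω).rank = r) :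
    ∃ δ : Ω → Matrix (Fin (n - r)) (Fin n) ℝ,
      (∀ i j, Measurable fun ω => δ ω i j) ∧
      ∀ᵐ ω ∂μ,
        (δ ω).rank = n - r ∧
        ((Submodule.span ℝ (Set.range fun i => δ ω i) : Set (Fin n → ℝ)) =
          {v : Fin n → ℝ | ∀ u ∈ Submodule.span ℝ (Set.range fun i => γ ω i),
            dotProduct v u = 0}) ∧
        γ ω * (δ ω).transpose = 0 ∧
        IsUnit ((Matrix.reindex (finSumFinEquiv.trans
            (finCongr (Nat.add_sub_cancel' hrn.le))) (Equiv.refl (Fin n)))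
          (Matrix.fromRows (γ ω) (δ ω))) := by
  classical
  refine ⟨fun ω => Stmt8Aux.delta r n (γ ω), fun i j => Stmt8Aux.delta_meas hγ i j, ?_⟩
  filter_upwards [hrank] with ω hA
  obtain ⟨e, he, heq⟩ := Stmt8Aux.delta_spec (Stmt8Aux.exists_good hA)
  simp only [heq]
  refine ⟨Stmt8Aux.good_rank he, ?_, Stmt8Aux.mul_dOf_transpose hA he,
    Stmt8Aux.stacked_isUnit hrn hA he⟩
  have h1 : Submodule.span ℝ (Set.range fun i => Stmt8Aux.dOf r n e (γ ω) i) =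
      LinearMap.ker (γ ω).mulVecLin := Stmt8Aux.span_rows_dOf hA he
  rw [h1]
  exact Stmt8Aux.ker_eq_orth
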